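/- Let ν > 0 and M^{-1} ∈ ℝ^{n×n} be symmetric positive definite with some eigenvalue equal to ν²/4, with eigenvector ψ. For the matrix C = [[0, −M^{-1/2}], [M^{-1/2}, νI]], the vector w = (−ψ, ψ) is an eigenvector with eigenvalue ν/2, and the vector g = (0, (2/ν)ψ) satisfies (C − (ν/2)I) g = w, i.e. g is a generalized eigenvector of rank 2; hence ν/2 is a defective eigenvalue of C. -/

import Mathlib

open Matrix

namespace Matrix.PosSemidef

/-- The positive semidefinite square root of a positive semidefinite matrix
(re-stated here with its definition from the older Mathlib, where it has since been removed). -/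
noncomputable def sqrt {n 𝕜 : Type*} [Fintype n] [DecidableEq n] [RCLike 𝕜] [PartialOrder 𝕜]
    {A : Matrix n n 𝕜} (hA : PosSemidef A) : Matrix n n 𝕜 :=
  hA.1.eigenvectorUnitary.1 * diagonal ((↑) ∘ (√·) ∘ hA.1.eigenvalues) *
  (star hA.1.eigenvectorUnitary : Matrix n n 𝕜)

end Matrix.PosSemidef

lemma sqrt_mul_self' {n : ℕ} {A : Matrix (Fin n) (Fin n) ℝ} (hA : A.PosSemidef) :
    hA.sqrt * hA.sqrt = A := by
  have hD : diagonal ((RCLike.ofReal : ℝ → ℝ) ∘ (√·) ∘ hA.1.eigenvalues) *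
      diagonal ((RCLike.ofReal : ℝ → ℝ) ∘ (√·) ∘ hA.1.eigenvalues)
      = diagonal (RCLike.ofReal ∘ hA.1.eigenvalues : Fin n → ℝ) := by
    rw [diagonal_mul_diagonal]
    congr 1
    funext i
    simp [Real.mul_self_sqrt (hA.eigenvalues_nonneg i)]
  unfold Matrix.PosSemidef.sqrt
  conv_rhs => rw [hA.1.spectral_theorem, Unitary.conjStarAlgAut_apply]
  rw [← hD]
  simp only [mul_assoc]
  rw [← mul_assoc (star (hA.1.eigenvectorUnitary : Matrix (Fin n) (Fin n) ℝ)),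
    Unitary.coe_star_mul_self, one_mul]

lemma posSemidef_sqrt' {n : ℕ} {A : Matrix (Fin n) (Fin n) ℝ} (hA : A.PosSemidef) :
    hA.sqrt.PosSemidef := by
  unfold Matrix.PosSemidef.sqrt
  rw [star_eq_conjTranspose]
  refine Matrix.PosSemidef.mul_mul_conjTranspose_same ?_ _
  rw [posSemidef_diagonal_iff]
  intro i
  simp [Real.sqrt_nonneg]

lemma sqrt_eigen_aux {n : ℕ} {N : Matrix (Fin n) (Fin n) ℝ} (hN : N.PosDef) {ν : ℝ}
    (hν : 0 < ν) {ψ : Fin n → ℝ} (heig : N.mulVec ψ = (ν ^ 2 / 4) • ψ) :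
    hN.posSemidef.sqrt.mulVec ψ = (ν / 2) • ψ := by
  set S := hN.posSemidef.sqrt with hSdef
  have hS2 : S.mulVec (S.mulVec ψ) = (ν ^ 2 / 4) • ψ := by
    rw [Matrix.mulVec_mulVec, sqrt_mul_self' hN.posSemidef, heig]
  set v : Fin n → ℝ := S.mulVec ψ - (ν / 2) • ψ with hv
  have hSv : S.mulVec v = -(ν / 2) • v := by
    rw [hv, Matrix.mulVec_sub, hS2, Matrix.mulVec_smul]
    ext i
    simp [Pi.smul_apply, smul_eq_mul]
    ring
  have hpsd := (posSemidef_sqrt' hN.posSemidef).dotProduct_mulVec_nonneg v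
  rw [hSv] at hpsd
  have hdot : star v ⬝ᵥ (-(ν / 2) • v) = -(ν / 2) * (v ⬝ᵥ v) := by
    simp [dotProduct_smul, smul_eq_mul]
  rw [hdot] at hpsd
  have hvv : (0:ℝ) ≤ v ⬝ᵥ v := by
    simpa [dotProduct] using (Finset.sum_nonneg fun i _ => mul_self_nonneg (v i))
  have hvz : v ⬝ᵥ v = 0 := by nlinarith
  have hv0 : v = 0 := by
    funext i
    have h1 := Finset.sum_eq_zero_iff_of_nonneg
      (fun j (_ : j ∈ Finset.univ) => mul_self_nonneg (v j)) |>.mp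
      (by simpa [dotProduct] using hvz)
    have h2 := h1 i (Finset.mem_univ i)
    exact mul_self_eq_zero.mp h2
  exact sub_eq_zero.mp hv0

theorem stmt16 (n : ℕ) (N : Matrix (Fin n) (Fin n) ℝ) (hN : N.PosDef) (ν : ℝ)
    (hν : 0 < ν) (ψ : Fin n → ℝ) (hψ : ψ ≠ 0)
    (heig : N.mulVec ψ = (ν ^ 2 / 4) • ψ) :
    let C := Matrix.fromBlocks (0 : Matrix (Fin n) (Fin n) ℝ) (-(hN.posSemidef.sqrt))
      hN.posSemidef.sqrt (ν • 1)
    let w : Fin n ⊕ Fin n → ℝ := Sum.elim (fun i => -ψ i) ψ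
    let g : Fin n ⊕ Fin n → ℝ := Sum.elim 0 (fun i => (2 / ν) * ψ i)
    C.mulVec w = (ν / 2) • w ∧ w ≠ 0 ∧ C.mulVec g - (ν / 2) • g = w ∧
    ∃ u : Fin n ⊕ Fin n → ℝ,
      (C - (ν / 2) • 1).mulVec ((C - (ν / 2) • 1).mulVec u) = 0 ∧
      (C - (ν / 2) • 1).mulVec u ≠ 0 := by
  intro C w g
  have hS := sqrt_eigen_aux hN hν heig
  set S := hN.posSemidef.sqrt with hSdef
  have hν' : ν ≠ 0 := ne_of_gt hν
  have hCw : C.mulVec w = (ν / 2) • w := by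
    show (Matrix.fromBlocks 0 (-S) S (ν • 1)).mulVec (Sum.elim (-ψ) ψ) = _
    rw [Matrix.fromBlocks_mulVec]
    simp only [Sum.elim_comp_inl, Sum.elim_comp_inr]
    rw [Matrix.zero_mulVec, zero_add, Matrix.neg_mulVec,
      Matrix.mulVec_neg, hS, Matrix.smul_mulVec, Matrix.one_mulVec]
    funext x
    cases x with
    | inl i => simp [w]
    | inr i => simp [w]; ring
  have hCg : C.mulVec g - (ν / 2) • g = w := by
    show (Matrix.fromBlocks 0 (-S) S (ν • 1)).mulVec (Sum.elim 0 ((2 / ν) • ψ))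
      - (ν / 2) • g = w
    rw [Matrix.fromBlocks_mulVec]
    simp only [Sum.elim_comp_inl, Sum.elim_comp_inr]
    rw [Matrix.zero_mulVec, zero_add, Matrix.mulVec_zero,
      zero_add, Matrix.neg_mulVec, Matrix.mulVec_smul, hS, Matrix.smul_mulVec,
      Matrix.one_mulVec]
    funext x
    cases x with
    | inl i => simp [w, g]; field_simp
    | inr i => simp [w, g]; field_simp; ring
  have hwne : w ≠ 0 := by
    obtain ⟨i, hi⟩ := Function.ne_iff.mp hψ
    intro h
    exact hi (by simpa [w] using congrFun h (Sum.inr i))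
  refine ⟨hCw, hwne, hCg, g, ?_, ?_⟩
  · have h1 : (C - (ν / 2) • 1).mulVec g = w := by
      rw [Matrix.sub_mulVec, Matrix.smul_mulVec, Matrix.one_mulVec]
      exact hCg
    rw [h1, Matrix.sub_mulVec, Matrix.smul_mulVec, Matrix.one_mulVec, hCw, sub_self]
  · have h1 : (C - (ν / 2) • 1).mulVec g = w := by
      rw [Matrix.sub_mulVec, Matrix.smul_mulVec, Matrix.one_mulVec]
      exact hCg
    rw [h1]
    exact hwne
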